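/- Let p : [0,T] → ℝ solve ṗ = g(p) with p(0)=p₀ and let P be a function, piecewise smooth on a partition 0=t₀<...<t_N=T with jumps [P]_{n-1} at nodes, satisfying P(0⁻)=p₀. Let φ solve the backward adjoint problem −φ̇ = ḡ φ + ψ on [0,T] with φ(T)=0, where ḡ(t) = ∫₀¹ g'(p(t)s + P(t)(1−s)) ds. Then the error e = p − P satisfies ∫₀^T e ψ dt = Σ_{n=1}^N { ∫_{I_n} (g(P) − Ṗ) φ dt − [P]_{n-1} φ(t_{n-1}) }. -/

import Mathlib

open intervalIntegral

/-- Mean value form: `g a - g b = (∫₀¹ g'(ra+(1-r)b) dr) * (a - b)`. -/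
lemma gbar_mvt (g : ℝ → ℝ) (hg : ContDiff ℝ 1 g) (a b : ℝ) :
    g a - g b = (∫ r in (0:ℝ)..1, deriv g (r * a + (1 - r) * b)) * (a - b) := by
  have hc : Continuous (deriv g) := hg.continuous_deriv le_rfl
  have hd : ∀ x, HasDerivAt g (deriv g x) x := fun x =>
    ((hg.differentiable one_ne_zero) x).hasDerivAt
  have hL : ∀ r : ℝ, HasDerivAt (fun r : ℝ => r * a + (1 - r) * b) (a - b) r := by
    intro r
    have h1 : HasDerivAt (fun r : ℝ => r * a + (1 - r) * b)
        (1 * a + (0 - 1) * b) r :=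
      ((hasDerivAt_id r).mul_const a).add
        (((hasDerivAt_const r (1:ℝ)).sub (hasDerivAt_id r)).mul_const b)
    convert h1 using 1; ring
  have hu : ∀ r ∈ Set.uIcc (0:ℝ) 1, HasDerivAt (fun r : ℝ => g (r * a + (1 - r) * b))
      (deriv g (r * a + (1 - r) * b) * (a - b)) r := fun r _ =>
    (hd _).comp r (hL r)
  have hint : IntervalIntegrable
      (fun r : ℝ => deriv g (r * a + (1 - r) * b) * (a - b))
      MeasureTheory.volume 0 1 :=
    ((hc.comp (by continuity)).mul continuous_const).intervalIntegrable _ _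
  have := intervalIntegral.integral_eq_sub_of_hasDerivAt hu hint
  rw [intervalIntegral.integral_mul_const] at this
  rw [this]; norm_num

/-- A posteriori error representation for the scalar ODE prototype:
if `p` solves `ṗ = g(p)`, `P` is piecewise smooth (pieces `Ppiece n` on
`I_n = (t_n, t_{n+1}]`, with left-hand values `Pminus` at the nodes and
`P(0⁻) = p₀`), and `φ` solves the backward adjoint problem
`−φ̇ = ḡ φ + ψ`, `φ(T) = 0`, with `ḡ(s) = ∫₀¹ g'(p(s)r + P(s)(1−r)) dr`, then
`∫₀^T e ψ dt = Σ_n { ∫_{I_n} (g(P) − Ṗ) φ dt − [P]_{n} φ(t_n) }` where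
`e = p − P` and `[P]_n = P⁺_n − P⁻_n`. -/
theorem ode_error_representation
    (g : ℝ → ℝ) (hg : ContDiff ℝ 1 g)
    (T : ℝ) (hT : 0 < T) (N : ℕ) (hN : 0 < N)
    (t : ℕ → ℝ) (ht0 : t 0 = 0) (htN : t N = T)
    (htmono : ∀ n < N, t n < t (n + 1))
    (p0 : ℝ) (p : ℝ → ℝ)
    (hp : ∀ s ∈ Set.Icc (0:ℝ) T, HasDerivAt p (g (p s)) s)
    (hp0 : p 0 = p0)
    (Ppiece : ℕ → ℝ → ℝ) (Pdot : ℕ → ℝ → ℝ)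
    (hP : ∀ n < N, ∀ s ∈ Set.Icc (t n) (t (n + 1)),
      HasDerivAt (Ppiece n) (Pdot n s) s)
    (Pfun : ℝ → ℝ)
    (hPfun : ∀ n < N, ∀ s ∈ Set.Ioc (t n) (t (n + 1)), Pfun s = Ppiece n s)
    (Pminus : ℕ → ℝ)
    (hPminus0 : Pminus 0 = p0)
    (hPminus : ∀ n, Pminus (n + 1) = Ppiece n (t (n + 1)))
    (ψ : ℝ → ℝ) (hψ : IntervalIntegrable ψ MeasureTheory.volume 0 T)
    (gbar : ℝ → ℝ)
    (hgbar : ∀ s, gbar s = ∫ r in (0:ℝ)..1, deriv g (r * p s + (1 - r) * Pfun s))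
    (φ : ℝ → ℝ)
    (hφ : ∀ s ∈ Set.Icc (0:ℝ) T, HasDerivAt φ (-(gbar s * φ s + ψ s)) s)
    (hφT : φ T = 0)
    (hint : ∀ n < N, IntervalIntegrable
      (fun s => (g (Ppiece n s) - Pdot n s) * φ s) MeasureTheory.volume
      (t n) (t (n + 1)))
    (hint' : IntervalIntegrable (fun s => (p s - Pfun s) * ψ s)
      MeasureTheory.volume 0 T) :
    ∫ s in (0:ℝ)..T, (p s - Pfun s) * ψ s =
      ∑ n ∈ Finset.range N,
        ((∫ s in (t n)..(t (n + 1)), (g (Ppiece n s) - Pdot n s) * φ s) -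
          (Ppiece n (t n) - Pminus n) * φ (t n)) := by
  -- monotonicity of the nodes
  have hmono : ∀ i j, i ≤ j → j ≤ N → t i ≤ t j := by
    intro i j hij hjN
    induction j with
    | zero => simp_all
    | succ k ih =>
      rcases Nat.lt_or_ge i (k+1) with h | h
      · exact le_trans (ih (Nat.lt_succ_iff.mp h) (le_trans (Nat.le_succ k) hjN))
          (le_of_lt (htmono k (Nat.lt_of_succ_le hjN)))
      · have : i = k + 1 := le_antisymm hij h
        simp [this]
  have hsub : ∀ n < N, Set.Icc (t n) (t (n+1)) ⊆ Set.Icc (0:ℝ) T := by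
    intro n hn s hs
    constructor
    · calc (0:ℝ) = t 0 := ht0.symm
        _ ≤ t n := hmono 0 n (Nat.zero_le n) (le_of_lt hn)
        _ ≤ s := hs.1
    · calc s ≤ t (n+1) := hs.2
        _ ≤ t N := hmono (n+1) N hn le_rfl
        _ = T := htN
  -- integrability of e·ψ on subintervals
  have hintn : ∀ n < N, IntervalIntegrable (fun s => (p s - Pfun s) * ψ s)
      MeasureTheory.volume (t n) (t (n+1)) := by
    intro n hn
    refine hint'.mono_set ?_
    rw [Set.uIcc_of_le (le_of_lt (htmono n hn)), Set.uIcc_of_le (le_of_lt hT)]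
    exact hsub n hn
  -- per-interval identity
  have key : ∀ n < N,
      (∫ s in (t n)..(t (n+1)), (p s - Pfun s) * ψ s)
        = (∫ s in (t n)..(t (n+1)), (g (Ppiece n s) - Pdot n s) * φ s)
          - ((p (t (n+1)) - Pminus (n+1)) * φ (t (n+1))
              - (p (t n) - Ppiece n (t n)) * φ (t n)) := by
    intro n hn
    have hab : t n ≤ t (n+1) := le_of_lt (htmono n hn)
    set a := t n with ha
    set b := t (n+1) with hb
    set f' : ℝ → ℝ := fun s =>
      (g (p s) - Pdot n s) * φ s + (p s - Ppiece n s) * (-(gbar s * φ s + ψ s))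
      with hf'
    have hderiv : ∀ s ∈ Set.uIcc a b,
        HasDerivAt (fun s => (p s - Ppiece n s) * φ s) (f' s) s := by
      intro s hs
      rw [Set.uIcc_of_le hab] at hs
      have hs' := hsub n hn hs
      exact ((hp s hs').sub (hP n hn s hs)).mul (hφ s hs')
    -- f' agrees with the nice function on Ioc a b
    set A : ℝ → ℝ := fun s =>
      (g (Ppiece n s) - Pdot n s) * φ s - (p s - Pfun s) * ψ s with hA
    have heq : ∀ s ∈ Set.uIoc a b, f' s = A s := by
      intro s hs
      rw [Set.uIoc_of_le hab] at hs
      have hPf : Pfun s = Ppiece n s := hPfun n hn s hs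
      have hmvt : g (p s) - g (Ppiece n s) = gbar s * (p s - Ppiece n s) := by
        rw [hgbar s, hPf]
        exact gbar_mvt g hg (p s) (Ppiece n s)
      simp only [hf', hA, hPf]
      linear_combination φ s * hmvt
    have hintA : IntervalIntegrable A MeasureTheory.volume a b :=
      (hint n hn).sub (hintn n hn)
    have hintf' : IntervalIntegrable f' MeasureTheory.volume a b := by
      refine hintA.congr_ae ?_
      refine (MeasureTheory.ae_restrict_iff' measurableSet_uIoc).mpr ?_
      exact Filter.Eventually.of_forall (fun s hs => (heq s hs).symm)
    have hFTC := intervalIntegral.integral_eq_sub_of_hasDerivAt hderiv hintf'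
    have hcongr : (∫ s in a..b, f' s) = ∫ s in a..b, A s :=
      intervalIntegral.integral_congr_ae
        (Filter.Eventually.of_forall heq)
    have hsplit : (∫ s in a..b, A s)
        = (∫ s in a..b, (g (Ppiece n s) - Pdot n s) * φ s)
          - ∫ s in a..b, (p s - Pfun s) * ψ s :=
      intervalIntegral.integral_sub (hint n hn) (hintn n hn)
    have hPb : Ppiece n b = Pminus (n+1) := (hPminus n).symm
    rw [hcongr, hsplit] at hFTC
    rw [hPb] at hFTC
    linarith [hFTC]
  -- sum the subinterval integrals
  have hsum : ∑ n ∈ Finset.range N, ∫ s in (t n)..(t (n+1)), (p s - Pfun s) * ψ s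
      = ∫ s in (0:ℝ)..T, (p s - Pfun s) * ψ s := by
    rw [intervalIntegral.sum_integral_adjacent_intervals hintn, ht0, htN]
  rw [← hsum, Finset.sum_congr rfl (fun n hn => key n (Finset.mem_range.mp hn))]
  -- telescoping
  set F : ℕ → ℝ := fun n => (p (t n) - Pminus n) * φ (t n) with hF
  have hterm : ∀ n,
      (∫ s in (t n)..(t (n+1)), (g (Ppiece n s) - Pdot n s) * φ s)
        - ((p (t (n+1)) - Pminus (n+1)) * φ (t (n+1))
            - (p (t n) - Ppiece n (t n)) * φ (t n))
      = ((∫ s in (t n)..(t (n+1)), (g (Ppiece n s) - Pdot n s) * φ s)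
          - (Ppiece n (t n) - Pminus n) * φ (t n)) - (F (n+1) - F n) := by
    intro n; simp only [hF]; ring
  rw [Finset.sum_congr rfl (fun n _ => hterm n), Finset.sum_sub_distrib,
    Finset.sum_range_sub F]
  have hFN : F N = 0 := by simp [hF, htN, hφT]
  have hF0 : F 0 = 0 := by simp [hF, ht0, hp0, hPminus0]
  rw [hFN, hF0]; ring
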